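/- Let N = q ∧ m and suppose nm − λ⌈N/2⌉ > 0. (i) If λ σ̂² ≥ d_1²(PE) + d_2²(PE), where σ̂² = ‖E‖²/(nm), then the sequence e_k := ‖E − (PE)_{2k}‖²/(nm − λk), k = 0, 1, …, ⌊N/2⌋, is nondecreasing: ‖E‖²/(nm) ≤ ‖E − (PE)_2‖²/(nm − λ) ≤ ‖E − (PE)_4‖²/(nm − 2λ) ≤ ⋯. (ii) For any 1 ≤ k ≤ r with 2k ≤ N − 2 and nm − λr > 0, if λ ≥ nm / ( ‖E − (PE)_{2k}‖² / [d_{2k+1}²(PE) + d_{2k+2}²(PE)] + k ), then ‖E − (PE)_{2k}‖²/(nm − λk) ≤ ‖E − (PE)_{2r ∧ N}‖²/(nm − λr). -/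

import Mathlib

open scoped BigOperators NNReal ENNReal
open Classical MeasureTheory ProbabilityTheory

noncomputable section

/-- Squared Frobenius (Hilbert–Schmidt) norm of a real matrix. -/
def frob2 {n m : ℕ} (M : Matrix (Fin n) (Fin m) ℝ) : ℝ :=
  ∑ i, ∑ j, (M i j) ^ 2

/-- `sval M k` is the `k`-th largest singular value of `M` (1-based indexing),
i.e. the square root of the `k`-th largest eigenvalue of `Mᴴ * M`; by convention
it is `0` for `k = 0` and for `k > m`. -/
def sval {n m : ℕ} (M : Matrix (Fin n) (Fin m) ℝ) (k : ℕ) : ℝ :=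
  if h : 1 ≤ k ∧ k ≤ m then
    Real.sqrt ((show (M.transpose * M).IsHermitian by
      simpa using Matrix.isHermitian_conjTranspose_mul_self M).eigenvalues
      (Tuple.sort (show (M.transpose * M).IsHermitian by
      simpa using Matrix.isHermitian_conjTranspose_mul_self M).eigenvalues ⟨m - k, by omega⟩))
  else 0

/-- A best rank-`k` approximation of `M` in Frobenius norm (rank-`k` truncated SVD),
with the convention that the rank-`0` truncation is `0`. -/
def trunc {n m : ℕ} (M : Matrix (Fin n) (Fin m) ℝ) (k : ℕ) :
    Matrix (Fin n) (Fin m) ℝ :=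
  if k = 0 then 0
  else Classical.epsilon fun B : Matrix (Fin n) (Fin m) ℝ =>
    B.rank ≤ k ∧ ∀ C : Matrix (Fin n) (Fin m) ℝ, C.rank ≤ k → frob2 (M - B) ≤ frob2 (M - C)

/-- `K_λ = ⌊(nm-1)/λ⌋ ∧ q ∧ m`. -/
def Kfun (n m q : ℕ) (lam : ℝ) : ℕ :=
  min (min (Nat.floor ((((n * m : ℕ) : ℝ) - 1) / lam)) q) m

/-- `σ̂_k² = ‖Y - (PY)_k‖² / (nm - λ k)`. -/
def sighat2 {n m : ℕ} (Y : Matrix (Fin n) (Fin m) ℝ)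
    (P : Matrix (Fin n) (Fin n) ℝ) (lam : ℝ) (k : ℕ) : ℝ :=
  frob2 (Y - trunc (P * Y) k) / (((n * m : ℕ) : ℝ) - lam * k)

/-- The selected rank `k̂ = ∑_{k=1}^{K_λ} 1{d_k²(PY) ≥ λ σ̂_k²}`,
which minimizes `σ̂_k²` over `{0, 1, …, K_λ}`. -/
def khat {n m : ℕ} (Y : Matrix (Fin n) (Fin m) ℝ)
    (P : Matrix (Fin n) (Fin n) ℝ) (q : ℕ) (lam : ℝ) : ℕ :=
  ∑ k ∈ Finset.Icc 1 (Kfun n m q lam),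
    if lam * sighat2 Y P lam k ≤ (sval (P * Y) k) ^ 2 then 1 else 0

namespace SVDAux
open Matrix Finset

section Frob
variable {n m p : ℕ}

lemma conjT_eq_transpose (X : Matrix (Fin n) (Fin m) ℝ) : Xᴴ = Xᵀ := by
  ext i j; simp [Matrix.conjTranspose_apply]

lemma frob2_nonneg (X : Matrix (Fin n) (Fin m) ℝ) : 0 ≤ frob2 X :=
  Finset.sum_nonneg fun _ _ => Finset.sum_nonneg fun _ _ => sq_nonneg _

lemma frob2_eq_zero {X : Matrix (Fin n) (Fin m) ℝ} (h : frob2 X ≤ 0) : X = 0 := by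
  have h0 : frob2 X = 0 := le_antisymm h (frob2_nonneg X)
  unfold frob2 at h0
  have h1 := (Finset.sum_eq_zero_iff_of_nonneg
    (fun i _ => Finset.sum_nonneg fun j _ => sq_nonneg (X i j))).mp h0
  ext i j
  have := (Finset.sum_eq_zero_iff_of_nonneg (fun j _ => sq_nonneg (X i j))).mp
    (h1 i (Finset.mem_univ i))
  have := this j (Finset.mem_univ j)
  simpa [pow_eq_zero_iff] using this

lemma trace_conjTranspose_mul (Y Z : Matrix (Fin n) (Fin m) ℝ) :
    Matrix.trace (Yᴴ * Z) = ∑ i, ∑ j, Y i j * Z i j := by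
  simp only [Matrix.trace, Matrix.diag, Matrix.mul_apply, Matrix.conjTranspose_apply,
    star_trivial]
  exact Finset.sum_comm

lemma frob2_eq_trace (X : Matrix (Fin n) (Fin m) ℝ) :
    frob2 X = Matrix.trace (Xᴴ * X) := by
  rw [trace_conjTranspose_mul]; unfold frob2
  exact Finset.sum_congr rfl fun i _ => Finset.sum_congr rfl fun j _ => (pow_two _)

lemma frob2_add (Y Z : Matrix (Fin n) (Fin m) ℝ) :
    frob2 (Y + Z) = frob2 Y + frob2 Z + 2 * Matrix.trace (Yᴴ * Z) := by
  rw [trace_conjTranspose_mul]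
  unfold frob2
  have h1 : ∀ i, ∑ j, (Y i j + Z i j) ^ 2
      = (∑ j, (Y i j)^2) + ((∑ j, (Z i j)^2) + 2 * ∑ j, Y i j * Z i j) := by
    intro i
    rw [Finset.mul_sum, ← Finset.sum_add_distrib, ← Finset.sum_add_distrib]
    exact Finset.sum_congr rfl fun j _ => by ring
  calc ∑ i, ∑ j, ((Y + Z) i j) ^ 2
      = ∑ i, ((∑ j, (Y i j)^2) + ((∑ j, (Z i j)^2) + 2 * ∑ j, Y i j * Z i j)) := by
        exact Finset.sum_congr rfl fun i _ => by simpa [Matrix.add_apply] using h1 i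
    _ = _ := by
        rw [Finset.sum_add_distrib, Finset.sum_add_distrib, Finset.mul_sum]
        ring

lemma frob2_add_of_trace {Y Z : Matrix (Fin n) (Fin m) ℝ}
    (h : Matrix.trace (Yᴴ * Z) = 0) :
    frob2 (Y + Z) = frob2 Y + frob2 Z := by
  rw [frob2_add, h]; ring

/-- For a "semi-orthogonal" `U` (orthonormal columns), `frob2 (Y * Uᴴ) = frob2 Y`. -/
lemma frob2_mul_conjTranspose {U : Matrix (Fin m) (Fin p) ℝ} (hU : Uᴴ * U = 1)
    (Y : Matrix (Fin n) (Fin p) ℝ) : frob2 (Y * Uᴴ) = frob2 Y := by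
  rw [frob2_eq_trace, frob2_eq_trace]
  rw [Matrix.conjTranspose_mul, Matrix.conjTranspose_conjTranspose]
  calc Matrix.trace (U * Yᴴ * (Y * Uᴴ)) = Matrix.trace (U * (Yᴴ * (Y * Uᴴ))) := by
        rw [Matrix.mul_assoc]
    _ = Matrix.trace ((Yᴴ * (Y * Uᴴ)) * U) := Matrix.trace_mul_comm _ _
    _ = Matrix.trace (Yᴴ * Y) := by
        rw [Matrix.mul_assoc, Matrix.mul_assoc, hU, Matrix.mul_one]

/-- Frobenius decomposition along an orthogonal projection on the right. -/
lemma frob2_proj_right {R : Matrix (Fin m) (Fin m) ℝ} (hRH : Rᴴ = R) (hRR : R * R = R)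
    (X : Matrix (Fin n) (Fin m) ℝ) :
    frob2 X = frob2 (X * R) + frob2 (X * (1 - R)) := by
  have hcross : Matrix.trace ((X * R)ᴴ * (X * (1 - R))) = 0 := by
    have hz : (X * (1 - R)) * R = 0 := by
      rw [Matrix.mul_assoc, Matrix.sub_mul, Matrix.one_mul, hRR, sub_self, Matrix.mul_zero]
    rw [Matrix.conjTranspose_mul, hRH, Matrix.mul_assoc, Matrix.trace_mul_comm,
      Matrix.mul_assoc, hz, Matrix.mul_zero, Matrix.trace_zero]
  have hsplit : X = X * R + X * (1 - R) := by
    rw [← Matrix.mul_add]; simp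
  calc frob2 X = frob2 (X * R + X * (1 - R)) := by rw [← hsplit]
    _ = _ := frob2_add_of_trace hcross

lemma frob2_mul_semiOrth_le {U : Matrix (Fin m) (Fin p) ℝ} (hU : Uᴴ * U = 1)
    (X : Matrix (Fin n) (Fin m) ℝ) : frob2 (X * U) ≤ frob2 X := by
  have hRH : (U * Uᴴ)ᴴ = U * Uᴴ := by
    rw [Matrix.conjTranspose_mul, Matrix.conjTranspose_conjTranspose]
  have hRR : (U * Uᴴ) * (U * Uᴴ) = U * Uᴴ := by
    rw [Matrix.mul_assoc, ← Matrix.mul_assoc Uᴴ, hU, Matrix.one_mul]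
  have h := frob2_proj_right hRH hRR X
  have h2 : frob2 (X * (U * Uᴴ)) = frob2 (X * U) := by
    rw [← Matrix.mul_assoc, frob2_mul_conjTranspose hU]
  nlinarith [frob2_nonneg (X * (1 - U * Uᴴ))]

end Frob

section Spec
variable {n m : ℕ}

def ev (M : Matrix (Fin n) (Fin m) ℝ) : Fin m → ℝ :=
  (show (M.transpose * M).IsHermitian by
      simpa using Matrix.isHermitian_conjTranspose_mul_self M).eigenvalues

def μa (M : Matrix (Fin n) (Fin m) ℝ) : ℕ → ℝ :=
  fun t => if h : t < m then ev M (Tuple.sort (ev M) ⟨m - 1 - t, by omega⟩) else 0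

def Tsum (M : Matrix (Fin n) (Fin m) ℝ) (s : ℕ) : ℝ := ∑ t ∈ Finset.range s, μa M t

def Vmat (M : Matrix (Fin n) (Fin m) ℝ) : Matrix (Fin m) (Fin m) ℝ :=
  ((show (M.transpose * M).IsHermitian by
      simpa using Matrix.isHermitian_conjTranspose_mul_self M).eigenvectorUnitary : Matrix (Fin m) (Fin m) ℝ)

variable (M : Matrix (Fin n) (Fin m) ℝ)

lemma ev_nonneg (i : Fin m) : 0 ≤ ev M i := by
  have hp : (M.transpose * M).PosSemidef := by
    simpa using Matrix.posSemidef_conjTranspose_mul_self M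
  exact hp.eigenvalues_nonneg i

lemma μa_nonneg (t : ℕ) : 0 ≤ μa M t := by
  unfold μa; split
  · exact ev_nonneg M _
  · exact le_refl 0

lemma μa_antitone {t t' : ℕ} (h : t ≤ t') : μa M t' ≤ μa M t := by
  unfold μa
  by_cases h2 : t' < m
  · have h1 : t < m := lt_of_le_of_lt h h2
    rw [dif_pos h1, dif_pos h2]
    have := Tuple.monotone_sort (ev M)
      (a := (⟨m - 1 - t', by omega⟩ : Fin m)) (b := (⟨m - 1 - t, by omega⟩ : Fin m))
      (by simp [Fin.le_def]; omega)
    simpa using this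
  · rw [dif_neg h2]
    exact μa_nonneg M t

lemma hV1 : (Vmat M)ᴴ * Vmat M = 1 := by
  have := ((show (M.transpose * M).IsHermitian by
      simpa using Matrix.isHermitian_conjTranspose_mul_self M).eigenvectorUnitary).2
  rw [Matrix.mem_unitaryGroup_iff'] at this
  simpa [Vmat, Matrix.star_eq_conjTranspose] using this

lemma hV2 : Vmat M * (Vmat M)ᴴ = 1 := by
  have := ((show (M.transpose * M).IsHermitian by
      simpa using Matrix.isHermitian_conjTranspose_mul_self M).eigenvectorUnitary).2
  rw [Matrix.mem_unitaryGroup_iff] at this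
  simpa [Vmat, Matrix.star_eq_conjTranspose] using this

lemma hspec : Mᴴ * M = Vmat M * Matrix.diagonal (ev M) * (Vmat M)ᴴ := by
  have h := (show (M.transpose * M).IsHermitian by
      simpa using Matrix.isHermitian_conjTranspose_mul_self M).spectral_theorem
  rw [← Matrix.star_eq_conjTranspose]
  rw [conjT_eq_transpose, h]
  simp [Unitary.conjStarAlgAut_apply, RCLike.ofReal_real_eq_id, Vmat, ev]

lemma traceform (χ : Fin m → ℝ) :
    Matrix.trace ((Mᴴ * M) * (Vmat M * Matrix.diagonal χ * (Vmat M)ᴴ)) = ∑ i, ev M i * χ i := by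
  conv_lhs => rw [hspec M]
  have key : (Vmat M * Matrix.diagonal (ev M) * (Vmat M)ᴴ) * (Vmat M * Matrix.diagonal χ * (Vmat M)ᴴ)
      = Vmat M * (Matrix.diagonal (fun i => ev M i * χ i)) * (Vmat M)ᴴ := by
    simp only [Matrix.mul_assoc]
    rw [← Matrix.mul_assoc ((Vmat M)ᴴ) (Vmat M), hV1, Matrix.one_mul,
      ← Matrix.mul_assoc (Matrix.diagonal (ev M)) (Matrix.diagonal χ),
      Matrix.diagonal_mul_diagonal]
  rw [key, Matrix.trace_mul_cycle, hV1, Matrix.one_mul, Matrix.trace_diagonal]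

lemma trace_ev : Matrix.trace (Mᴴ * M) = ∑ i, ev M i := by
  have h := traceform M (fun _ => 1)
  rw [Matrix.diagonal_one, Matrix.mul_one, hV2 M, Matrix.mul_one] at h
  simpa using h

end Spec

section Sums
variable {n m : ℕ} (M : Matrix (Fin n) (Fin m) ℝ)

lemma Tsum_succ (s : ℕ) : Tsum M (s + 1) = Tsum M s + μa M s :=
  Finset.sum_range_succ _ _

lemma Tsum_mono {a b : ℕ} (h : a ≤ b) : Tsum M a ≤ Tsum M b := by
  unfold Tsum
  exact Finset.sum_le_sum_of_subset_of_nonneg (Finset.range_subset_range.mpr h)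
    (fun t _ _ => μa_nonneg M t)

lemma Tsum_eq_selsum (s : ℕ) :
    Tsum M s = ∑ i, ev M i *
      (if m - s ≤ (((Tuple.sort (ev M)).symm i : Fin m) : ℕ) then (1:ℝ) else 0) := by
  have hR : ∑ i, ev M i *
        (if m - s ≤ (((Tuple.sort (ev M)).symm i : Fin m) : ℕ) then (1:ℝ) else 0)
      = ∑ pos ∈ Finset.univ.filter (fun pos : Fin m => m - s ≤ (pos : ℕ)),
          ev M (Tuple.sort (ev M) pos) := by
    rw [Finset.sum_filter,
      ← Equiv.sum_comp (Tuple.sort (ev M))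
        (fun i => ev M i *
          (if m - s ≤ (((Tuple.sort (ev M)).symm i : Fin m) : ℕ) then (1:ℝ) else 0))]
    refine Finset.sum_congr rfl fun pos _ => ?_
    simp only [Function.comp, Equiv.symm_apply_apply]
    by_cases h : m - s ≤ (pos : ℕ) <;> simp [h]
  rw [hR]
  have h1 : Tsum M s = ∑ t ∈ Finset.range (min s m), μa M t := by
    unfold Tsum
    rw [Finset.sum_subset (Finset.range_subset_range.mpr (min_le_left s m))]
    intro t ht hts
    simp only [Finset.mem_range] at ht hts
    unfold μa
    rw [dif_neg (by omega)]
  rw [h1]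
  refine Finset.sum_bij' (fun t ht => (⟨m - 1 - t, by
      simp only [Finset.mem_range] at ht; omega⟩ : Fin m))
    (fun pos hpos => m - 1 - (pos : ℕ)) ?_ ?_ ?_ ?_ ?_
  · intro t ht
    simp only [Finset.mem_range] at ht
    simp only [Finset.mem_filter, Finset.mem_univ, true_and]
    omega
  · intro pos hpos
    simp only [Finset.mem_filter, Finset.mem_univ, true_and] at hpos
    simp only [Finset.mem_range]
    have := pos.isLt
    omega
  · intro t ht
    simp only [Finset.mem_range] at ht
    show m - 1 - (m - 1 - t) = t
    omega
  · intro pos hpos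
    simp only [Finset.mem_filter, Finset.mem_univ, true_and] at hpos
    have := pos.isLt
    ext
    show m - 1 - (m - 1 - (pos : ℕ)) = (pos : ℕ)
    omega
  · intro t ht
    simp only [Finset.mem_range] at ht
    unfold μa
    rw [dif_pos (by omega)]

lemma trace_sub_Tsum (s : ℕ) (htr : Matrix.trace (Mᴴ * M) = ∑ i, ev M i) :
    Matrix.trace (Mᴴ * M) - Tsum M s
      = ∑ i, ev M i *
        (if (((Tuple.sort (ev M)).symm i : Fin m) : ℕ) < m - s then (1:ℝ) else 0) := by
  rw [htr, Tsum_eq_selsum, ← Finset.sum_sub_distrib]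
  refine Finset.sum_congr rfl fun i _ => ?_
  by_cases h : m - s ≤ (((Tuple.sort (ev M)).symm i : Fin m) : ℕ)
  · rw [if_pos h, if_neg (by omega)]; ring
  · rw [if_neg h, if_pos (by omega)]; ring

end Sums

lemma indicator_card {m p : ℕ} (hpm : p ≤ m) :
    ∑ i : Fin m, (if (i : ℕ) < p then (1:ℝ) else 0) = p := by
  have hcard : (Finset.univ.filter (fun i : Fin m => (i : ℕ) < p)).card = p := by
    have h := Finset.card_bij' (s := Finset.univ.filter (fun i : Fin m => (i : ℕ) < p))
      (t := Finset.range p)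
      (i := fun (i : Fin m) _ => (i : ℕ))
      (j := fun t ht => (⟨t, by simp only [Finset.mem_range] at ht; omega⟩ : Fin m))
      ?_ ?_ ?_ ?_
    · rw [h, Finset.card_range]
    · intro a ha
      simp only [Finset.mem_filter, Finset.mem_univ, true_and] at ha
      simpa using ha
    · intro t ht
      simp only [Finset.mem_filter, Finset.mem_univ, true_and]
      simpa using ht
    · intro a ha
      rfl
    · intro t ht
      rfl
  rw [Finset.sum_boole, hcard]

lemma polytope {m p : ℕ} (hp1 : 1 ≤ p) (hpm : p ≤ m) (asc τ : Fin m → ℝ)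
    (hmono : Monotone asc) (h0 : ∀ i, 0 ≤ asc i) (hτ0 : ∀ i, 0 ≤ τ i) (hτ1 : ∀ i, τ i ≤ 1)
    (hsum : ∑ i, τ i = p) :
    ∑ i, asc i * (if (i : ℕ) < p then (1:ℝ) else 0) ≤ ∑ i, asc i * τ i := by
  set θ := asc ⟨p - 1, by omega⟩ with hθ
  have key : ∀ i : Fin m,
      θ * (τ i - (if (i : ℕ) < p then (1:ℝ) else 0))
        ≤ asc i * τ i - asc i * (if (i : ℕ) < p then (1:ℝ) else 0) := by
    intro i
    by_cases hi : (i : ℕ) < p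
    · rw [if_pos hi]
      have hle : asc i ≤ θ := hmono (by simp [Fin.le_def]; omega)
      nlinarith [hτ1 i]
    · rw [if_neg hi]
      have hge : θ ≤ asc i := hmono (by simp [Fin.le_def]; omega)
      have hθ0 : 0 ≤ θ := h0 _
      nlinarith [hτ0 i]
  have hsum2 : ∑ i : Fin m, θ * (τ i - (if (i : ℕ) < p then (1:ℝ) else 0)) = 0 := by
    rw [← Finset.mul_sum, Finset.sum_sub_distrib, hsum, indicator_card hpm, sub_self, mul_zero]
  have := Finset.sum_le_sum (fun i (_ : i ∈ Finset.univ) => key i)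
  rw [hsum2, Finset.sum_sub_distrib] at this
  linarith


section KyFan
variable {n m : ℕ}

/-- Orthonormal columns spanning inside the kernel of `C`. -/
lemma exists_semiOrth_ker (C : Matrix (Fin n) (Fin m) ℝ) {s : ℕ} (hC : C.rank ≤ s)
    (hsm : s < m) :
    ∃ U : Matrix (Fin m) (Fin (m - s)) ℝ, Uᴴ * U = 1 ∧ C * U = 0 := by
  set p := m - s with hp
  let φ : (Fin m → ℝ) ≃ₗ[ℝ] EuclideanSpace ℝ (Fin m) :=
    (WithLp.linearEquiv 2 ℝ (Fin m → ℝ)).symm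
  let K : Submodule ℝ (EuclideanSpace ℝ (Fin m)) := (LinearMap.ker C.mulVecLin).map (φ : (Fin m → ℝ) →ₗ[ℝ] EuclideanSpace ℝ (Fin m))
  have hfr : p ≤ Module.finrank ℝ K := by
    have h1 : Module.finrank ℝ K = Module.finrank ℝ (LinearMap.ker C.mulVecLin) :=
      LinearEquiv.finrank_map_eq φ _
    have h2 := LinearMap.finrank_range_add_finrank_ker C.mulVecLin
    have h3 : Module.finrank ℝ (Fin m → ℝ) = m := by simp
    rw [h3] at h2
    have h4 : Module.finrank ℝ (LinearMap.range C.mulVecLin) ≤ s := hC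
    omega
  let b := stdOrthonormalBasis ℝ K
  let u : Fin p → EuclideanSpace ℝ (Fin m) := fun i => (b (Fin.castLE hfr i) : K)
  have hker : ∀ i, C.mulVec (u i) = 0 := by
    intro i
    have hmem : (u i) ∈ K := (b (Fin.castLE hfr i)).2
    obtain ⟨y, hy, hyu⟩ := hmem
    have h0 : C.mulVecLin y = 0 := hy
    rw [Matrix.mulVecLin_apply] at h0
    have : C.mulVec (u i) = C.mulVec y := by rw [← hyu]; rfl
    rw [this, h0]
  have horth : ∀ i j, (∑ a, u i a * u j a) = if i = j then (1:ℝ) else 0 := by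
    intro i j
    have hb := b.orthonormal
    rw [orthonormal_iff_ite] at hb
    have := hb (Fin.castLE hfr i) (Fin.castLE hfr j)
    rw [Submodule.coe_inner] at this
    rw [PiLp.inner_apply] at this
    simp only [RCLike.inner_apply, starRingEnd_apply, star_trivial] at this
    simp only [Fin.castLE_inj] at this
    rw [← this]; exact Finset.sum_congr rfl fun a _ => mul_comm _ _
  refine ⟨Matrix.of (fun a j => u j a), ?_, ?_⟩
  · ext j k
    simp only [Matrix.mul_apply, Matrix.conjTranspose_apply, Matrix.of_apply, star_trivial,
      Matrix.one_apply]
    exact horth j k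
  · ext a j
    have h0 := congrFun (hker j) a
    simpa [Matrix.mul_apply, Matrix.mulVec, dotProduct] using h0

lemma trace_diag_sandwich {p : ℕ} (d : Fin m → ℝ) (W : Matrix (Fin m) (Fin p) ℝ) :
    Matrix.trace (Wᴴ * (Matrix.diagonal d * W)) = ∑ i, d i * ∑ j, (W i j) ^ 2 := by
  have hentry : ∀ jj : Fin p, (Wᴴ * (Matrix.diagonal d * W)) jj jj
      = ∑ x, W x jj * (d x * W x jj) := by
    intro jj
    rw [Matrix.mul_apply]
    refine Finset.sum_congr rfl fun x _ => ?_
    rw [Matrix.conjTranspose_apply, Matrix.diagonal_mul, star_trivial]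
  rw [Matrix.trace]
  calc ∑ jj, Matrix.diag (Wᴴ * (Matrix.diagonal d * W)) jj
      = ∑ jj, ∑ x, W x jj * (d x * W x jj) :=
        Finset.sum_congr rfl fun jj _ => hentry jj
    _ = ∑ x, ∑ jj, W x jj * (d x * W x jj) := Finset.sum_comm
    _ = ∑ i, d i * ∑ j, (W i j) ^ 2 := by
        refine Finset.sum_congr rfl fun i _ => ?_
        rw [Finset.mul_sum]
        refine Finset.sum_congr rfl fun j _ => by ring

lemma kyfan_lower (M : Matrix (Fin n) (Fin m) ℝ) (s : ℕ) (C : Matrix (Fin n) (Fin m) ℝ)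
    (hC : C.rank ≤ s) :
    Matrix.trace (Mᴴ * M) - Tsum M s ≤ frob2 (M - C) := by
  by_cases hsm : m ≤ s
  · have h1 : Tsum M m ≤ Tsum M s := Tsum_mono M hsm
    have h2 : Tsum M m = Matrix.trace (Mᴴ * M) := by
      rw [Tsum_eq_selsum, trace_ev]
      refine Finset.sum_congr rfl fun i _ => ?_
      rw [if_pos (by omega), mul_one]
    have := frob2_nonneg (M - C)
    linarith
  · push_neg at hsm
    obtain ⟨U, hUU, hCU⟩ := exists_semiOrth_ker C hC hsm
    -- step 1 : frob2 (M * U) ≤ frob2 (M - C)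
    have hstep1 : frob2 (M * U) ≤ frob2 (M - C) := by
      have h1 : (M - C) * U = M * U := by
        rw [Matrix.sub_mul, hCU, sub_zero]
      calc frob2 (M * U) = frob2 ((M - C) * U) := by rw [h1]
        _ ≤ frob2 (M - C) := frob2_mul_semiOrth_le hUU _
    -- step 2 : frob2 (M * U) = ∑ i, ev M i * t i
    set W : Matrix (Fin m) (Fin (m - s)) ℝ := (Vmat M)ᴴ * U with hW
    have hWW : Wᴴ * W = 1 := by
      rw [hW, Matrix.conjTranspose_mul, Matrix.conjTranspose_conjTranspose,
        Matrix.mul_assoc, ← Matrix.mul_assoc (Vmat M), hV2, Matrix.one_mul, hUU]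
    set t : Fin m → ℝ := fun i => ∑ j, (W i j) ^ 2 with ht
    have hstep2 : frob2 (M * U) = ∑ i, ev M i * t i := by
      rw [frob2_eq_trace, Matrix.conjTranspose_mul]
      have hassoc : Uᴴ * Mᴴ * (M * U) = Uᴴ * (Mᴴ * M) * U := by
        rw [Matrix.mul_assoc, Matrix.mul_assoc, Matrix.mul_assoc]
      rw [hassoc, hspec M]
      have hassoc2 : Uᴴ * (Vmat M * Matrix.diagonal (ev M) * (Vmat M)ᴴ) * U
          = Wᴴ * (Matrix.diagonal (ev M) * W) := by
        rw [hW, Matrix.conjTranspose_mul, Matrix.conjTranspose_conjTranspose]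
        simp only [Matrix.mul_assoc]
      rw [hassoc2, trace_diag_sandwich]
    -- step 3 : bounds on t
    have ht0 : ∀ i, 0 ≤ t i := fun i => Finset.sum_nonneg fun j _ => sq_nonneg _
    have ht1 : ∀ i, t i ≤ 1 := by
      intro i
      set Q : Matrix (Fin m) (Fin m) ℝ := 1 - W * Wᴴ with hQ
      have hQH : Qᴴ = Q := by
        rw [hQ, Matrix.conjTranspose_sub, Matrix.conjTranspose_one, Matrix.conjTranspose_mul,
          Matrix.conjTranspose_conjTranspose]
      have hQQ : Q * Q = Q := by
        have hmid : W * Wᴴ * (W * Wᴴ) = W * Wᴴ := by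
          rw [Matrix.mul_assoc, ← Matrix.mul_assoc Wᴴ W, hWW, Matrix.one_mul]
        rw [hQ, Matrix.mul_sub, Matrix.mul_one, Matrix.sub_mul, Matrix.one_mul, hmid]
        abel
      have hQdiag : Q i i = (Qᴴ * Q) i i := by rw [hQH, hQQ]
      have hpos : 0 ≤ Q i i := by
        rw [hQdiag, Matrix.mul_apply]
        refine Finset.sum_nonneg fun a _ => ?_
        simp only [Matrix.conjTranspose_apply, star_trivial]
        exact mul_self_nonneg _
      have hQii : Q i i = 1 - t i := by
        rw [hQ, Matrix.sub_apply, Matrix.one_apply_eq, Matrix.mul_apply, ht]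
        simp only [Matrix.conjTranspose_apply, star_trivial]
        congr 1
        exact Finset.sum_congr rfl fun j _ => (pow_two _).symm
      linarith [hQii ▸ hpos]
    have htsum : ∑ i, t i = (m - s : ℕ) := by
      have h1 : ∑ i, t i = Matrix.trace (Wᴴ * W) := by
        rw [Matrix.trace]
        simp only [Matrix.diag, Matrix.mul_apply, Matrix.conjTranspose_apply, star_trivial, ht]
        rw [Finset.sum_comm]
        exact Finset.sum_congr rfl fun i _ => Finset.sum_congr rfl fun j _ => pow_two _
      rw [h1, hWW, Matrix.trace_one]
      simp
    -- step 4 : polytope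
    have hsort := Tuple.monotone_sort (ev M)
    have hlower : Matrix.trace (Mᴴ * M) - Tsum M s ≤ ∑ i, ev M i * t i := by
      rw [trace_sub_Tsum M s (trace_ev M)]
      have hre1 : ∑ i, ev M i *
            (if (((Tuple.sort (ev M)).symm i : Fin m) : ℕ) < m - s then (1:ℝ) else 0)
          = ∑ q, ev M (Tuple.sort (ev M) q) * (if (q : ℕ) < m - s then (1:ℝ) else 0) :=
        Fintype.sum_equiv (Tuple.sort (ev M)).symm _ _ (fun i => by
          simp only [Equiv.apply_symm_apply])
      have hre2 : ∑ i, ev M i * t i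
          = ∑ q, ev M (Tuple.sort (ev M) q) * t (Tuple.sort (ev M) q) :=
        Fintype.sum_equiv (Tuple.sort (ev M)).symm _ _ (fun i => by
          simp only [Equiv.apply_symm_apply])
      have hre3 : ∑ q, t (Tuple.sort (ev M) q) = ((m - s : ℕ) : ℝ) := by
        rw [Equiv.sum_comp (Tuple.sort (ev M)) t, htsum]
      rw [hre1, hre2]
      exact polytope (by omega) (by omega) (fun q => ev M (Tuple.sort (ev M) q))
        (fun q => t (Tuple.sort (ev M) q)) hsort (fun q => ev_nonneg M _)
        (fun q => ht0 _) (fun q => ht1 _) hre3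
    linarith [hstep2 ▸ hstep1]

end KyFan

section Trunc
variable {n m : ℕ} (M : Matrix (Fin n) (Fin m) ℝ)

def selv (M : Matrix (Fin n) (Fin m) ℝ) (s : ℕ) : Fin m → ℝ :=
  fun i => if m - s ≤ (((Tuple.sort (ev M)).symm i : Fin m) : ℕ) then (1:ℝ) else 0

def ProjM (M : Matrix (Fin n) (Fin m) ℝ) (s : ℕ) : Matrix (Fin m) (Fin m) ℝ :=
  Vmat M * Matrix.diagonal (selv M s) * (Vmat M)ᴴ

def Bstar (M : Matrix (Fin n) (Fin m) ℝ) (s : ℕ) : Matrix (Fin n) (Fin m) ℝ :=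
  M * ProjM M s

lemma ProjM_herm (s : ℕ) : (ProjM M s)ᴴ = ProjM M s := by
  unfold ProjM
  rw [Matrix.conjTranspose_mul, Matrix.conjTranspose_mul, Matrix.conjTranspose_conjTranspose,
    Matrix.diagonal_conjTranspose]
  have : star (selv M s) = selv M s := by
    funext i; simp [Pi.star_apply, star_trivial]
  rw [this, Matrix.mul_assoc]

lemma ProjM_idem (s : ℕ) : ProjM M s * ProjM M s = ProjM M s := by
  unfold ProjM
  have hsel : (fun i => selv M s i * selv M s i) = selv M s := by
    funext i; unfold selv; by_cases h : m - s ≤ (((Tuple.sort (ev M)).symm i : Fin m) : ℕ) <;>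
      simp [h]
  simp only [Matrix.mul_assoc]
  rw [← Matrix.mul_assoc ((Vmat M)ᴴ) (Vmat M), hV1, Matrix.one_mul,
    ← Matrix.mul_assoc (Matrix.diagonal (selv M s)) (Matrix.diagonal (selv M s)),
    Matrix.diagonal_mul_diagonal, hsel]

lemma Bstar_rank (s : ℕ) : (Bstar M s).rank ≤ s := by
  have h1 : (Bstar M s).rank ≤ (ProjM M s).rank := Matrix.rank_mul_le_right _ _
  have h2 : (ProjM M s).rank ≤ (Matrix.diagonal (selv M s)).rank := by
    calc (ProjM M s).rank ≤ (Vmat M * Matrix.diagonal (selv M s)).rank :=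
          Matrix.rank_mul_le_left _ _
      _ ≤ _ := Matrix.rank_mul_le_right _ _
  have h3 : (Matrix.diagonal (selv M s)).rank ≤ s := by
    rw [Matrix.rank_diagonal]
    by_cases hsm : s < m
    · have hinj : Function.Injective
          (fun x : {i // selv M s i ≠ 0} =>
            (⟨(((Tuple.sort (ev M)).symm x.1 : Fin m) : ℕ) - (m - s), by
              have hx := x.2
              unfold selv at hx
              by_cases hc : m - s ≤ (((Tuple.sort (ev M)).symm x.1 : Fin m) : ℕ)
              · have := (((Tuple.sort (ev M)).symm x.1 : Fin m)).isLt
                omega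
              · simp [hc] at hx⟩ : Fin s)) := by
        intro x y hxy
        have hx := x.2; have hy := y.2
        unfold selv at hx hy
        by_cases hcx : m - s ≤ (((Tuple.sort (ev M)).symm x.1 : Fin m) : ℕ)
        · by_cases hcy : m - s ≤ (((Tuple.sort (ev M)).symm y.1 : Fin m) : ℕ)
          · have hval : (((Tuple.sort (ev M)).symm x.1 : Fin m) : ℕ) - (m - s)
                = (((Tuple.sort (ev M)).symm y.1 : Fin m) : ℕ) - (m - s) := by
              simpa [Fin.ext_iff] using hxy
            have heq : ((Tuple.sort (ev M)).symm x.1 : Fin m)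
                = ((Tuple.sort (ev M)).symm y.1 : Fin m) := by
              ext; omega
            have := (Tuple.sort (ev M)).symm.injective heq
            exact Subtype.ext this
          · simp [hcy] at hy
        · simp [hcx] at hx
      have := Fintype.card_le_of_injective _ hinj
      simpa using this
    · calc Fintype.card {i // selv M s i ≠ 0} ≤ Fintype.card (Fin m) :=
          Fintype.card_subtype_le _
        _ ≤ s := by simp; omega
  omega

lemma Bstar_val (s : ℕ) : frob2 (M - Bstar M s) = Matrix.trace (Mᴴ * M) - Tsum M s := by
  have hsplit : M - Bstar M s = M * (1 - ProjM M s) := by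
    rw [Matrix.mul_sub, Matrix.mul_one]; rfl
  have hG : (1 - ProjM M s) * (1 - ProjM M s) = 1 - ProjM M s := by
    rw [Matrix.mul_sub, Matrix.mul_one, Matrix.sub_mul, Matrix.one_mul, ProjM_idem]
    abel
  have hGH : (1 - ProjM M s)ᴴ = 1 - ProjM M s := by
    rw [Matrix.conjTranspose_sub, Matrix.conjTranspose_one, ProjM_herm]
  rw [hsplit, frob2_eq_trace, Matrix.conjTranspose_mul, hGH]
  have step1 : Matrix.trace ((1 - ProjM M s) * Mᴴ * (M * (1 - ProjM M s)))
      = Matrix.trace ((Mᴴ * M) * (1 - ProjM M s)) := by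
    calc Matrix.trace ((1 - ProjM M s) * Mᴴ * (M * (1 - ProjM M s)))
        = Matrix.trace ((M * (1 - ProjM M s)) * ((1 - ProjM M s) * Mᴴ)) := by
          rw [Matrix.trace_mul_comm, Matrix.mul_assoc]
      _ = Matrix.trace (M * ((1 - ProjM M s) * ((1 - ProjM M s) * Mᴴ))) := by
          rw [Matrix.mul_assoc]
      _ = Matrix.trace (M * ((1 - ProjM M s) * Mᴴ)) := by
          rw [← Matrix.mul_assoc (1 - ProjM M s), hG]
      _ = Matrix.trace ((Mᴴ * M) * (1 - ProjM M s)) := by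
          rw [Matrix.trace_mul_comm, Matrix.mul_assoc]
          rw [Matrix.trace_mul_comm, Matrix.mul_assoc]
  have hassoc : (1 - ProjM M s) * Mᴴ * (M * (1 - ProjM M s))
      = ((1 - ProjM M s) * Mᴴ) * (M * (1 - ProjM M s)) := rfl
  rw [show ((1 - ProjM M s) * Mᴴ) * (M * (1 - ProjM M s))
      = (1 - ProjM M s) * Mᴴ * (M * (1 - ProjM M s)) from rfl]
  rw [step1, Matrix.mul_sub, Matrix.mul_one, Matrix.trace_sub]
  have : Matrix.trace ((Mᴴ * M) * ProjM M s) = Tsum M s := by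
    unfold ProjM
    rw [traceform, Tsum_eq_selsum]
    rfl
  rw [this]

lemma trunc_exists (s : ℕ) :
    ∃ B : Matrix (Fin n) (Fin m) ℝ, B.rank ≤ s ∧
      ∀ C : Matrix (Fin n) (Fin m) ℝ, C.rank ≤ s → frob2 (M - B) ≤ frob2 (M - C) := by
  refine ⟨Bstar M s, Bstar_rank M s, fun C hC => ?_⟩
  rw [Bstar_val]
  exact kyfan_lower M s C hC

lemma trunc_spec {s : ℕ} (hs : s ≠ 0) :
    (trunc M s).rank ≤ s ∧
      ∀ C : Matrix (Fin n) (Fin m) ℝ, C.rank ≤ s → frob2 (M - trunc M s) ≤ frob2 (M - C) := by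
  have h := Classical.epsilon_spec (trunc_exists M s)
  unfold trunc
  rw [if_neg hs]
  exact h

lemma trunc_val (s : ℕ) :
    frob2 (M - trunc M s) = Matrix.trace (Mᴴ * M) - Tsum M s := by
  by_cases hs : s = 0
  · subst hs
    unfold trunc
    rw [if_pos rfl, sub_zero]
    have : Tsum M 0 = 0 := by unfold Tsum; simp
    rw [this, sub_zero, frob2_eq_trace]
  · obtain ⟨h1, h2⟩ := trunc_spec M hs
    refine le_antisymm ?_ ?_
    · have := h2 (Bstar M s) (Bstar_rank M s)
      rw [Bstar_val] at this
      exact this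
    · exact kyfan_lower M s _ h1

end Trunc

section Proj
variable {n m : ℕ} (E : Matrix (Fin n) (Fin m) ℝ) (P : Matrix (Fin n) (Fin n) ℝ)

/-! ### Projection interface -/

variable (E : Matrix (Fin n) (Fin m) ℝ) (P : Matrix (Fin n) (Fin n) ℝ)

lemma PH (hPt : P.transpose = P) : Pᴴ = P := by
  ext i j
  rw [Matrix.conjTranspose_apply, star_trivial]
  conv_rhs => rw [← hPt]
  rfl

lemma trunc_P_fix (hP2 : P * P = P) (hPt : P.transpose = P) {s : ℕ} (hs : s ≠ 0) :
    P * trunc (P * E) s = trunc (P * E) s := by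
  set B := trunc (P * E) s with hB
  obtain ⟨hB1, hB2⟩ := trunc_spec (P * E) hs
  have hrankPB : (P * B).rank ≤ s := le_trans (Matrix.rank_mul_le_right P B) hB1
  have hcross : Matrix.trace ((P * E - P * B)ᴴ * (P * B - B)) = 0 := by
    have hz : P * (P * B - B) = 0 := by
      rw [Matrix.mul_sub, ← Matrix.mul_assoc, hP2, sub_self]
    have h1 : P * E - P * B = P * (E - B) := by rw [Matrix.mul_sub]
    rw [h1, Matrix.conjTranspose_mul, PH P hPt, Matrix.mul_assoc, hz, Matrix.mul_zero,
      Matrix.trace_zero]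
  have hdecomp : frob2 (P * E - B) = frob2 (P * E - P * B) + frob2 (P * B - B) := by
    have hsum : (P * E - P * B) + (P * B - B) = P * E - B := by abel
    rw [← hsum, frob2_add_of_trace hcross]
  have hmin : frob2 (P * E - B) ≤ frob2 (P * E - P * B) := hB2 (P * B) hrankPB
  have hzero : frob2 (P * B - B) ≤ 0 := by linarith
  have hPBB : P * B - B = 0 := frob2_eq_zero hzero
  rwa [sub_eq_zero] at hPBB

lemma crossEB (hP2 : P * P = P) (hPt : P.transpose = P) (B : Matrix (Fin n) (Fin m) ℝ)
    (hPB : P * B = B) :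
    frob2 (E - B) = frob2 (E - P * E) + frob2 (P * E - B) := by
  have hcross : Matrix.trace ((E - P * E)ᴴ * (P * E - B)) = 0 := by
    have h1 : E - P * E = (1 - P) * E := by rw [Matrix.sub_mul, Matrix.one_mul]
    have hz : (1 - P) * (P * E - B) = 0 := by
      rw [Matrix.mul_sub, Matrix.sub_mul, Matrix.sub_mul, Matrix.one_mul, Matrix.one_mul,
        ← Matrix.mul_assoc, hP2, hPB]
      abel
    have h2 : (1 - P)ᴴ = 1 - P := by
      rw [Matrix.conjTranspose_sub, Matrix.conjTranspose_one, PH P hPt]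
    rw [h1, Matrix.conjTranspose_mul, h2, Matrix.mul_assoc, hz, Matrix.mul_zero,
      Matrix.trace_zero]
  have hsum : (E - P * E) + (P * E - B) = E - B := by abel
  rw [← hsum, frob2_add_of_trace hcross]

lemma keyid (hP2 : P * P = P) (hPt : P.transpose = P) (s : ℕ) :
    frob2 (E - trunc (P * E) s) = frob2 E - Tsum (P * E) s := by
  by_cases hs : s = 0
  · subst hs
    have h0 : trunc (P * E) 0 = 0 := by unfold trunc; rw [if_pos rfl]
    have hT0 : Tsum (P * E) 0 = 0 := by unfold Tsum; simp
    rw [h0, hT0, sub_zero, sub_zero]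
  · have hPB := trunc_P_fix E P hP2 hPt hs
    have h1 := crossEB E P hP2 hPt (trunc (P * E) s) hPB
    have h2 := crossEB E P hP2 hPt 0 (Matrix.mul_zero P)
    rw [sub_zero, sub_zero] at h2
    have h3 := trunc_val (P * E) s
    have h4 : frob2 (P * E) = Matrix.trace ((P * E)ᴴ * (P * E)) := frob2_eq_trace _
    linarith

/-! ### sval to μa -/

lemma sval_sq (M : Matrix (Fin n) (Fin m) ℝ) {k : ℕ} (hk : 1 ≤ k) :
    sval M k ^ 2 = μa M (k - 1) := by
  by_cases h : k ≤ m
  · unfold sval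
    rw [dif_pos ⟨hk, h⟩]
    show Real.sqrt (ev M (Tuple.sort (ev M) ⟨m - k, by omega⟩)) ^ 2 = μa M (k - 1)
    rw [Real.sq_sqrt (ev_nonneg M _)]
    unfold μa
    rw [dif_pos (by omega : k - 1 < m)]
    have hidx : (⟨m - 1 - (k - 1), by omega⟩ : Fin m) = ⟨m - k, by omega⟩ := by
      ext; simp; omega
    rw [hidx]
  · unfold sval
    rw [dif_neg (by omega)]
    unfold μa
    rw [dif_neg (by omega)]
    norm_num

/-! ### arithmetic chain -/

lemma arith_chain (nm lam F : ℝ) (hlam : 0 < lam) (T : ℕ → ℝ) {k l : ℕ} (hkl : k ≤ l)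
    (hpos : ∀ j : ℕ, k ≤ j → j ≤ l → 0 < nm - lam * j)
    (hstep : ∀ j : ℕ, k ≤ j → j < l →
      T (j + 1) - T j ≤ lam * ((F - T k) / (nm - lam * k))) :
    (F - T k) / (nm - lam * k) ≤ (F - T l) / (nm - lam * l) := by
  induction l, hkl using Nat.le_induction with
  | base => exact le_refl _
  | succ l hkl ih =>
    have ih' : (F - T k) / (nm - lam * k) ≤ (F - T l) / (nm - lam * l) :=
      ih (fun j h1 h2 => hpos j h1 (le_trans h2 (Nat.le_succ l)))
        (fun j h1 h2 => hstep j h1 (lt_trans h2 (Nat.lt_succ_self l)))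
    have hpl : 0 < nm - lam * l := hpos l hkl (Nat.le_succ l)
    have hpl1 : 0 < nm - lam * (l + 1 : ℕ) := hpos (l + 1) (le_trans hkl (Nat.le_succ l)) le_rfl
    have hδ : T (l + 1) - T l ≤ lam * ((F - T k) / (nm - lam * k)) :=
      hstep l hkl (Nat.lt_succ_self l)
    have h2 : lam * ((F - T k) / (nm - lam * k)) ≤ lam * ((F - T l) / (nm - lam * l)) :=
      mul_le_mul_of_nonneg_left ih' hlam.le
    have h3 : T (l + 1) - T l ≤ (lam * (F - T l)) / (nm - lam * l) := by
      rw [mul_div_assoc]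
      exact le_trans hδ h2
    have h4 : (T (l + 1) - T l) * (nm - lam * l) ≤ lam * (F - T l) :=
      (le_div_iff₀ hpl).mp h3
    refine le_trans ih' ?_
    rw [div_le_div_iff₀ hpl hpl1]
    have hcast : ((l + 1 : ℕ) : ℝ) = (l : ℝ) + 1 := by push_cast; ring
    rw [hcast]
    nlinarith [h4]

end Proj

section Chain
variable {n m : ℕ}

lemma Tsum_two_incr (M : Matrix (Fin n) (Fin m) ℝ) (j : ℕ) :
    Tsum M (2 * (j + 1)) = Tsum M (2 * j) + μa M (2 * j) + μa M (2 * j + 1) := by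
  have he : 2 * (j + 1) = (2 * j + 1) + 1 := by ring
  rw [he, Tsum_succ, Tsum_succ]

lemma Tsum_min_incr (M : Matrix (Fin n) (Fin m) ℝ) (N j : ℕ) :
    Tsum M (min (2 * (j + 1)) N) - Tsum M (min (2 * j) N)
      ≤ μa M (2 * j) + μa M (2 * j + 1) := by
  by_cases hN : 2 * j < N
  · have h1 : min (2 * j) N = 2 * j := min_eq_left (by omega)
    have h2 : Tsum M (min (2 * (j + 1)) N) ≤ Tsum M (2 * (j + 1)) :=
      Tsum_mono M (min_le_left _ _)
    have h3 := Tsum_two_incr M j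
    rw [h1]; linarith
  · have h1 : min (2 * j) N = N := min_eq_right (by omega)
    have h2 : min (2 * (j + 1)) N = N := min_eq_right (by omega)
    rw [h1, h2, sub_self]
    exact add_nonneg (μa_nonneg M _) (μa_nonneg M _)
end Chain

end SVDAux

theorem statement_12
    {n m q : ℕ}
    (E : Matrix (Fin n) (Fin m) ℝ) (P : Matrix (Fin n) (Fin n) ℝ)
    (hP2 : P * P = P) (hPt : P.transpose = P) (hPq : P.rank = q)
    (lam : ℝ) (hlam : 0 < lam)
    (hden : 0 < ((n * m : ℕ) : ℝ) - lam * (((min q m + 1) / 2 : ℕ) : ℝ)) :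
    ((sval (P * E) 1) ^ 2 + (sval (P * E) 2) ^ 2 ≤ lam * (frob2 E / ((n * m : ℕ) : ℝ)) →
      ∀ k l : ℕ, k ≤ l → l ≤ min q m / 2 →
        frob2 (E - trunc (P * E) (2 * k)) / (((n * m : ℕ) : ℝ) - lam * k) ≤
          frob2 (E - trunc (P * E) (2 * l)) / (((n * m : ℕ) : ℝ) - lam * l)) ∧
    (∀ k r : ℕ, 1 ≤ k → k ≤ r → 2 * k + 2 ≤ min q m →
      0 < ((n * m : ℕ) : ℝ) - lam * r →
      ((n * m : ℕ) : ℝ) /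
          (frob2 (E - trunc (P * E) (2 * k)) /
              ((sval (P * E) (2 * k + 1)) ^ 2 + (sval (P * E) (2 * k + 2)) ^ 2) + k) ≤ lam →
      frob2 (E - trunc (P * E) (2 * k)) / (((n * m : ℕ) : ℝ) - lam * k) ≤
        frob2 (E - trunc (P * E) (min (2 * r) (min q m))) /
          (((n * m : ℕ) : ℝ) - lam * r)) := by
  constructor
  · -- Part (i)
    intro hyp k l hkl hlN
    rw [SVDAux.keyid E P hP2 hPt (2 * k), SVDAux.keyid E P hP2 hPt (2 * l)]
    rw [SVDAux.sval_sq (P * E) (le_refl 1),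
      SVDAux.sval_sq (P * E) (by norm_num : (1:ℕ) ≤ 2)] at hyp
    rw [show (1:ℕ) - 1 = 0 by norm_num, show (2:ℕ) - 1 = 1 by norm_num] at hyp
    -- hyp : μa (P*E) 0 + μa (P*E) 1 ≤ lam * (frob2 E / nm)
    have hincr : ∀ j : ℕ, SVDAux.Tsum (P * E) (2 * (j + 1)) - SVDAux.Tsum (P * E) (2 * j)
        ≤ SVDAux.μa (P * E) 0 + SVDAux.μa (P * E) 1 := by
      intro j
      have h3 := SVDAux.Tsum_two_incr (P * E) j
      have ha := SVDAux.μa_antitone (P * E) (show 0 ≤ 2 * j by omega)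
      have hb := SVDAux.μa_antitone (P * E) (show 1 ≤ 2 * j + 1 by omega)
      linarith
    have hposj : ∀ j : ℕ, j ≤ l → 0 < ((n * m : ℕ) : ℝ) - lam * j := by
      intro j hj
      have hj2 : j ≤ (min q m + 1) / 2 := by omega
      have hc : (j : ℝ) ≤ (((min q m + 1) / 2 : ℕ) : ℝ) := Nat.cast_le.mpr hj2
      have h2 : lam * (j : ℝ) ≤ lam * (((min q m + 1) / 2 : ℕ) : ℝ) :=
        mul_le_mul_of_nonneg_left hc hlam.le
      linarith
    have hT0 : SVDAux.Tsum (P * E) (2 * 0) = 0 := by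
      show SVDAux.Tsum (P * E) 0 = 0
      unfold SVDAux.Tsum
      simp
    have hE0 : (frob2 E - SVDAux.Tsum (P * E) (2 * 0)) / (((n * m : ℕ) : ℝ) - lam * ((0:ℕ):ℝ))
        = frob2 E / ((n * m : ℕ) : ℝ) := by
      rw [hT0, Nat.cast_zero, mul_zero, sub_zero, sub_zero]
    have hμb : SVDAux.μa (P * E) 0 + SVDAux.μa (P * E) 1
        ≤ lam * ((frob2 E - SVDAux.Tsum (P * E) (2 * 0)) /
            (((n * m : ℕ) : ℝ) - lam * ((0:ℕ):ℝ))) := by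
      rw [hE0]; exact hyp
    have hstage1 := SVDAux.arith_chain ((n * m : ℕ) : ℝ) lam (frob2 E) hlam
      (fun j => SVDAux.Tsum (P * E) (2 * j)) (Nat.zero_le k)
      (fun j _ hj => hposj j (le_trans hj hkl))
      (fun j _ hj => le_trans (hincr j) hμb)
    have hstage2 := SVDAux.arith_chain ((n * m : ℕ) : ℝ) lam (frob2 E) hlam
      (fun j => SVDAux.Tsum (P * E) (2 * j)) hkl
      (fun j hj1 hj2 => hposj j hj2)
      (fun j hj1 hj2 => by
        refine le_trans (hincr j) (le_trans hμb ?_)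
        exact mul_le_mul_of_nonneg_left hstage1 hlam.le)
    exact hstage2
  · -- Part (ii)
    intro k r hk1 hkr h2k2 hposr hyp
    have hcastkr : lam * (k : ℝ) ≤ lam * (r : ℝ) :=
      mul_le_mul_of_nonneg_left (Nat.cast_le.mpr hkr) hlam.le
    have hposk : 0 < ((n * m : ℕ) : ℝ) - lam * (k : ℝ) := by linarith
    rw [SVDAux.sval_sq (P * E) (show 1 ≤ 2 * k + 1 by omega),
      SVDAux.sval_sq (P * E) (show 1 ≤ 2 * k + 2 by omega)] at hyp
    have hi1 : 2 * k + 1 - 1 = 2 * k := by omega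
    have hi2 : 2 * k + 2 - 1 = 2 * k + 1 := by omega
    rw [hi1, hi2] at hyp
    have hΔ0 : 0 ≤ SVDAux.μa (P * E) (2 * k) + SVDAux.μa (P * E) (2 * k + 1) :=
      add_nonneg (SVDAux.μa_nonneg _ _) (SVDAux.μa_nonneg _ _)
    have hG0 : 0 ≤ frob2 (E - trunc (P * E) (2 * k)) := SVDAux.frob2_nonneg _
    by_cases hΔ : SVDAux.μa (P * E) (2 * k) + SVDAux.μa (P * E) (2 * k + 1) = 0
    · exfalso
      rw [hΔ, div_zero, zero_add] at hyp
      have hk0 : (0 : ℝ) < (k : ℝ) := by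
        have : (1 : ℝ) ≤ (k : ℝ) := by exact_mod_cast hk1
        linarith
      have h1 : ((n * m : ℕ) : ℝ) ≤ lam * (k : ℝ) := (div_le_iff₀ hk0).mp hyp
      linarith
    · have hΔpos : 0 < SVDAux.μa (P * E) (2 * k) + SVDAux.μa (P * E) (2 * k + 1) :=
        lt_of_le_of_ne hΔ0 (Ne.symm hΔ)
      set Δ := SVDAux.μa (P * E) (2 * k) + SVDAux.μa (P * E) (2 * k + 1) with hΔdef
      set G := frob2 (E - trunc (P * E) (2 * k)) with hGdef
      have hD0 : 0 < G / Δ + (k : ℝ) := by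
        have h1 : 0 ≤ G / Δ := div_nonneg hG0 hΔ0
        have : (1 : ℝ) ≤ (k : ℝ) := by exact_mod_cast hk1
        linarith
      have h1 : ((n * m : ℕ) : ℝ) ≤ lam * (G / Δ + k) := (div_le_iff₀ hD0).mp hyp
      rw [mul_add] at h1
      have h2 : (((n * m : ℕ) : ℝ) - lam * k) * Δ ≤ lam * G := by
        have h3 : ((n * m : ℕ) : ℝ) - lam * k ≤ lam * (G / Δ) := by linarith
        calc (((n * m : ℕ) : ℝ) - lam * k) * Δ ≤ (lam * (G / Δ)) * Δ :=
              mul_le_mul_of_nonneg_right h3 hΔ0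
          _ = lam * G := by field_simp
      have hΔle : Δ ≤ lam * (G / (((n * m : ℕ) : ℝ) - lam * (k:ℝ))) := by
        rw [← mul_div_assoc]
        rw [le_div_iff₀ hposk]
        linarith [mul_comm Δ (((n * m : ℕ) : ℝ) - lam * (k:ℝ))]
      have hGkey : G = frob2 E - SVDAux.Tsum (P * E) (2 * k) := by
        rw [hGdef]; exact SVDAux.keyid E P hP2 hPt (2 * k)
      have hTk : min (2 * k) (min q m) = 2 * k := min_eq_left (by omega)
      have hchain := SVDAux.arith_chain ((n * m : ℕ) : ℝ) lam (frob2 E) hlam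
        (fun j => SVDAux.Tsum (P * E) (min (2 * j) (min q m))) hkr
        (fun j hj1 hj2 => by
          have : lam * (j : ℝ) ≤ lam * (r : ℝ) :=
            mul_le_mul_of_nonneg_left (Nat.cast_le.mpr hj2) hlam.le
          linarith)
        (fun j hj1 hj2 => by
          have ha := SVDAux.Tsum_min_incr (P * E) (min q m) j
          have hb : SVDAux.μa (P * E) (2 * j) ≤ SVDAux.μa (P * E) (2 * k) :=
            SVDAux.μa_antitone _ (by omega)
          have hc : SVDAux.μa (P * E) (2 * j + 1) ≤ SVDAux.μa (P * E) (2 * k + 1) :=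
            SVDAux.μa_antitone _ (by omega)
          have hd : SVDAux.Tsum (P * E) (min (2 * (j+1)) (min q m))
              - SVDAux.Tsum (P * E) (min (2 * j) (min q m)) ≤ Δ := by
            rw [hΔdef]; linarith
          refine le_trans hd (le_trans hΔle ?_)
          show lam * (G / (((n * m : ℕ) : ℝ) - lam * (k:ℝ)))
              ≤ lam * ((frob2 E - SVDAux.Tsum (P * E) (min (2 * k) (min q m))) /
                (((n * m : ℕ) : ℝ) - lam * (k:ℝ)))
          rw [hTk, ← hGkey])
      have hchain' : (frob2 E - SVDAux.Tsum (P * E) (min (2 * k) (min q m))) /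
            (((n * m : ℕ) : ℝ) - lam * (k:ℝ))
          ≤ (frob2 E - SVDAux.Tsum (P * E) (min (2 * r) (min q m))) /
            (((n * m : ℕ) : ℝ) - lam * (r:ℝ)) := hchain
      rw [hTk] at hchain'
      rw [hGkey, SVDAux.keyid E P hP2 hPt (min (2 * r) (min q m))]
      exact hchain'
end
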